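/- Let N be the subgroup of G_A generated by {a⁻ⁿαaⁿ : n ∈ ℤ}. Then N is isomorphic to the direct sum ⨁_{i∈ℤ} ℤ/3ℤ; concretely, for any integers n₁ < n₂ < … < n_k (k ≥ 1) and any ε₁, …, ε_k ∈ {1, −1}, the product (a^{−n₁}α^{ε₁}a^{n₁})(a^{−n₂}α^{ε₂}a^{n₂})⋯(a^{−n_k}α^{ε_k}a^{n_k}) is not the identity permutation of X^ℕ. -/

import Mathlib

/-!
We formalize the automaton `A` of the paper: alphabet `X = {1,2,3}` is encoded as
`Fin 3` (letter `i+1` ↦ `i`), states `a, b, c` are encoded as `0, 1, 2 : Fin 3`.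
Each state induces a permutation of the space `ℕ → Fin 3` of infinite sequences.

Note on conventions: in the paper, products of tree automorphisms compose
left-to-right (in a word `s₁s₂⋯sₙ`, the letter `s₁` acts first); in Mathlib,
`(f * g) w = f (g w)`, i.e. the right factor acts first.  Hence a paper word
`uv` is rendered as the Lean product `v * u`; e.g. the paper's `α = ab⁻¹`
(apply `a`, then `b⁻¹`) is `b⁻¹ * a` below.
-/

namespace Lamplighter

section Generic

variable {S X : Type*}

/-- The state of the automaton after reading the first `n` letters of `w`, starting at `s`. -/
def run (nxt : S → X → S) (s : S) (w : ℕ → X) : ℕ → S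
  | 0 => s
  | n + 1 => nxt (run nxt s w n) (w n)

/-- The output sequence of the automaton started in state `s` reading `w`. -/
def fwd (nxt : S → X → S) (out : S → Equiv.Perm X) (s : S) (w : ℕ → X) : ℕ → X :=
  fun n => out (run nxt s w n) (w n)

/-- Transition function of the inverse automaton. -/
def invNxt (nxt : S → X → S) (out : S → Equiv.Perm X) (s : S) (y : X) : S :=
  nxt s ((out s).symm y)

/-- The action of the inverse automaton, started at state `s`. -/
def bwd (nxt : S → X → S) (out : S → Equiv.Perm X) (s : S) (y : ℕ → X) : ℕ → X :=
  fun n => (out (run (invNxt nxt out) s y n)).symm (y n)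

theorem run_inv_fwd (nxt : S → X → S) (out : S → Equiv.Perm X) (s : S) (w : ℕ → X) :
    ∀ n, run (invNxt nxt out) s (fwd nxt out s w) n = run nxt s w n := by
  intro n
  induction n with
  | zero => rfl
  | succ n ih => simp [run, ih, invNxt, fwd]

theorem run_bwd (nxt : S → X → S) (out : S → Equiv.Perm X) (s : S) (y : ℕ → X) :
    ∀ n, run nxt s (bwd nxt out s y) n = run (invNxt nxt out) s y n := by
  intro n
  induction n with
  | zero => rfl
  | succ n ih => simp [run, ih, bwd, invNxt]

/-- The permutation of the space of infinite sequences induced by state `s`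
of an invertible automaton. -/
def statePerm (nxt : S → X → S) (out : S → Equiv.Perm X) (s : S) : Equiv.Perm (ℕ → X) where
  toFun := fwd nxt out s
  invFun := bwd nxt out s
  left_inv := fun w => funext fun n => by simp [bwd, run_inv_fwd, fwd]
  right_inv := fun y => funext fun n => by simp [fwd, run_bwd, bwd]

end Generic

/-- The alphabet `X = {1,2,3}`, encoded as `Fin 3`. -/
abbrev X3 := Fin 3

/-- Transition function of the automaton `A` (states `a = 0`, `b = 1`, `c = 2`):
from `a`: `1 ↦ a, 2 ↦ b, 3 ↦ c`; from `b`: `1 ↦ c, 2 ↦ a, 3 ↦ b`;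
from `c`: `1 ↦ b, 2 ↦ c, 3 ↦ a`. -/
def nxtA : Fin 3 → X3 → Fin 3 := ![![0, 1, 2], ![2, 0, 1], ![1, 2, 0]]

/-- Output permutations of the automaton `A`: state `a` acts on letters as the
transposition `(2 3)`, state `b` as `(1 3)`, state `c` as `(1 2)`. -/
def outA : Fin 3 → Equiv.Perm X3 := ![Equiv.swap 1 2, Equiv.swap 0 2, Equiv.swap 0 1]

/-- The permutation of `X^ℕ` given by state `a`. -/
def a : Equiv.Perm (ℕ → X3) := statePerm nxtA outA 0

/-- The permutation of `X^ℕ` given by state `b`. -/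
def b : Equiv.Perm (ℕ → X3) := statePerm nxtA outA 1

/-- The permutation of `X^ℕ` given by state `c`. -/
def c : Equiv.Perm (ℕ → X3) := statePerm nxtA outA 2

/-- The group `G_A` generated by the automaton `A`. -/
def GA : Subgroup (Equiv.Perm (ℕ → X3)) := Subgroup.closure {a, b, c}

/-- The element `α = ab⁻¹` of the paper (first apply `a`, then `b⁻¹`). -/
def α : Equiv.Perm (ℕ → X3) := b⁻¹ * a

/-- The set `W` of permutations acting coordinatewise by a sequence of even
permutations of the alphabet. -/
def W : Set (Equiv.Perm (ℕ → X3)) :=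
  {g | ∃ π : ℕ → Equiv.Perm X3, (∀ n, Equiv.Perm.sign (π n) = 1) ∧
    ∀ (w : ℕ → X3) (n : ℕ), g w n = π n (w n)}

/-- The subgroup `N` generated by the conjugates `a⁻ⁿ α aⁿ`, `n ∈ ℤ`
(in Lean's composition order: `aⁿ * α * a⁻ⁿ`). -/
def N : Subgroup (Equiv.Perm (ℕ → X3)) :=
  Subgroup.closure {g | ∃ n : ℤ, g = a ^ n * α * a ^ (-n)}

-- ===== new material =====
open Fin.CommRing
abbrev V : Type := ℕ → X3

lemma nxtA_eq : ∀ s x : Fin 3, nxtA s x = x - s := by decide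
lemma outA_eq : ∀ s x : Fin 3, outA s x = -x - s := by decide

lemma run_succ' (s : Fin 3) (w : V) (n : ℕ) :
    run nxtA s w (n + 1) = w n - run nxtA s w n := by
  rw [show run nxtA s w (n + 1) = nxtA (run nxtA s w n) (w n) from rfl, nxtA_eq]

lemma a_apply (w : V) (n : ℕ) : a w n = -(w n) - run nxtA 0 w n := by
  show outA (run nxtA 0 w n) (w n) = _
  rw [outA_eq]

lemma b_apply (w : V) (n : ℕ) : b w n = -(w n) - run nxtA 1 w n := by
  show outA (run nxtA 1 w n) (w n) = _
  rw [outA_eq]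

def sg (n : ℕ) : Fin 3 := (-1) ^ n
lemma sg_succ (n : ℕ) : sg (n + 1) = -sg n := by rw [sg, sg, pow_succ, mul_neg_one]
lemma sg_sq (n : ℕ) : sg n * sg n = 1 := by
  rw [sg, ← mul_pow, neg_mul_neg, one_mul, one_pow]

lemma run_add (w u : V) (n : ℕ) :
    run nxtA 0 (w + u) n = run nxtA 0 w n + run nxtA 0 u n := by
  induction n with
  | zero => rfl
  | succ n ih => rw [run_succ', run_succ', run_succ', ih, Pi.add_apply]; ring

lemma a_add (w u : V) : a (w + u) = a w + a u := by
  funext n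
  rw [Pi.add_apply, a_apply, a_apply, a_apply, run_add, Pi.add_apply]; ring

lemma run_one (w : V) (n : ℕ) : run nxtA 1 w n = run nxtA 0 w n + sg n := by
  induction n with
  | zero => show (1 : Fin 3) = 0 + sg 0; decide
  | succ n ih => rw [run_succ', run_succ', ih, sg_succ]; ring

def cc : V := fun _ => -1

lemma run_cc (n : ℕ) : run nxtA 0 cc n = (sg n - 1) * 2 := by
  induction n with
  | zero => show (0 : Fin 3) = (sg 0 - 1) * 2; decide
  | succ n ih =>
    rw [run_succ', ih, sg_succ]
    show (-1 : Fin 3) - (sg n - 1) * 2 = (-sg n - 1) * 2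
    generalize sg n = x
    revert x; decide

lemma a_cc (n : ℕ) : a cc n = sg n := by
  rw [a_apply, run_cc]
  show (-(-1) : Fin 3) - (sg n - 1) * 2 = sg n
  generalize sg n = x
  revert x; decide

lemma b_apply' (w : V) (n : ℕ) : b w n = a w n - sg n := by
  rw [b_apply, a_apply, run_one]; ring

lemma b_shift (w : V) : b (w + cc) = a w := by
  funext n
  rw [b_apply', a_add, Pi.add_apply, a_cc]; ring

lemma α_apply (w : V) : α w = w + cc := by
  show (b⁻¹ * a) w = w + cc
  rw [Equiv.Perm.mul_apply, ← b_shift w]; exact b.symm_apply_apply _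


open Multiplicative

def addP : Subgroup (Equiv.Perm V) where
  carrier := {g | ∀ x y : V, g (x + y) = g x + g y}
  mul_mem' := fun {g h} hg hh x y => by
    show g (h (x + y)) = g (h x) + g (h y)
    rw [hh x y, hg (h x) (h y)]
  one_mem' := fun x y => rfl
  inv_mem' := fun {g} hg x y => by
    apply g.injective
    rw [hg]; simp

lemma a_mem_addP : a ∈ addP := fun x y => a_add x y

lemma apow_add (m : ℤ) (x y : V) : (a ^ m) (x + y) = (a ^ m) x + (a ^ m) y :=
  addP.zpow_mem a_mem_addP m x y

def AMH (m : ℤ) : V →+ V := AddMonoidHom.mk' (⇑(a ^ m)) (apow_add m)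
lemma AMH_apply (m : ℤ) (x : V) : AMH m x = (a ^ m) x := rfl

lemma AMH_smul (m : ℤ) (t : Fin 3) (x : V) : AMH m (t • x) = t • AMH m x := by
  have h1 : t • x = (t.val : Fin 3) • x := by rw [Fin.cast_val_eq_self]
  rw [h1, Nat.cast_smul_eq_nsmul, AddMonoidHom.map_nsmul,
    ← Nat.cast_smul_eq_nsmul (Fin 3), Fin.cast_val_eq_self]

def vv (m : ℤ) : V := (a ^ m) cc

def tmh : Multiplicative V →* Equiv.Perm V where
  toFun u := Equiv.addRight u.toAdd
  map_one' := Equiv.ext fun w => add_zero w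
  map_mul' := fun x y => Equiv.ext fun w => by
    simp only [Equiv.Perm.mul_apply, Equiv.coe_addRight, toAdd_mul]
    abel

lemma tmh_apply (u : V) (w : V) : tmh (ofAdd u) w = w + u := rfl

lemma tmh_eq_one {u : V} (h : tmh (ofAdd u) = 1) : u = 0 := by
  have h2 := congrArg (fun g : Equiv.Perm V => g 0) h
  simpa [tmh_apply] using h2

lemma α_eq : α = tmh (ofAdd cc) := Equiv.ext fun w => by rw [α_apply]; rfl

lemma αzpow (t : ℤ) : α ^ t = tmh (ofAdd (t • cc)) := by
  rw [α_eq, ← map_zpow]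
  congr 1

lemma conj_tmh (m : ℤ) (u : V) :
    a ^ m * tmh (ofAdd u) * a ^ (-m) = tmh (ofAdd ((a ^ m) u)) := by
  apply Equiv.ext
  intro w
  show (a ^ m) ((a ^ (-m)) w + u) = w + (a ^ m) u
  rw [apow_add]
  congr 1
  show ((a ^ m) * (a ^ (-m))) w = w
  rw [← zpow_add]
  simp

lemma conj_eq (m t : ℤ) : a ^ m * α ^ t * a ^ (-m) = tmh (ofAdd (t • vv m)) := by
  rw [αzpow, conj_tmh]
  congr 2
  show AMH m (t • cc) = t • vv m
  rw [AddMonoidHom.map_zsmul, AMH_apply]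
  rfl


open Polynomial

def Ssum : Module.End (Fin 3) V where
  toFun u n := ∑ k ∈ Finset.range n, u k
  map_add' u v := by funext n; simp [Finset.sum_add_distrib]
  map_smul' t u := by funext n; simp [Finset.mul_sum]

def Tw : Module.End (Fin 3) V where
  toFun u n := sg n * u n
  map_add' u v := by funext n; simp [mul_add]
  map_smul' t u := by funext n; simp [Pi.smul_apply, smul_eq_mul]; ring

lemma Ssum_apply (u : V) (n : ℕ) : Ssum u n = ∑ k ∈ Finset.range n, u k := rfl
lemma Tw_apply (u : V) (n : ℕ) : Tw u n = sg n * u n := rfl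

lemma Tw_Tw (u : V) : Tw (Tw u) = u := by
  funext n
  rw [Tw_apply, Tw_apply, ← mul_assoc, sg_sq, one_mul]

def A' : Module.End (Fin 3) V := Tw * (Ssum - 1) * Tw

lemma run_zero_eq (w : V) (n : ℕ) :
    run nxtA 0 w n = -(sg n * ∑ k ∈ Finset.range n, sg k * w k) := by
  induction n with
  | zero => show (0 : Fin 3) = -(sg 0 * ∑ k ∈ Finset.range 0, sg k * w k); simp
  | succ n ih =>
    rw [run_succ', ih, Finset.sum_range_succ, sg_succ]
    have hx := sg_sq n
    generalize sg n = x at hx ⊢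
    generalize (∑ k ∈ Finset.range n, sg k * w k) = SS
    generalize w n = y
    revert hx; revert x; revert SS; revert y
    decide

lemma a_eq_A' (w : V) : a w = A' w := by
  funext n
  have h1 : A' w n = sg n * ((∑ k ∈ Finset.range n, sg k * w k) - sg n * w n) := by
    show Tw ((Ssum - 1) (Tw w)) n = _
    rw [Tw_apply, LinearMap.sub_apply, Module.End.one_apply, Pi.sub_apply, Ssum_apply]
    rfl
  rw [h1, a_apply, run_zero_eq]
  have hx := sg_sq n
  generalize sg n = x at hx ⊢
  generalize (∑ k ∈ Finset.range n, sg k * w k) = SS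
  generalize w n = y
  revert hx; revert x; revert SS; revert y
  decide

lemma apow_nat (d : ℕ) : ∀ w : V, (a ^ d) w = (A' ^ d) w := by
  induction d with
  | zero => intro w; simp
  | succ d ih =>
    intro w
    rw [pow_succ, pow_succ]
    show (a ^ d) (a w) = (A' ^ d) (A' w)
    rw [a_eq_A', ih]

lemma A'_pow (d : ℕ) : ∀ u : V, (A' ^ d) u = Tw (((Ssum - 1) ^ d) (Tw u)) := by
  induction d with
  | zero => intro u; simp [Tw_Tw]
  | succ d ih =>
    intro u
    rw [pow_succ', pow_succ']
    show A' ((A' ^ d) u) = Tw ((Ssum - 1) (((Ssum - 1) ^ d) (Tw u)))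
    rw [ih]
    show Tw ((Ssum - 1) (Tw (Tw (((Ssum - 1) ^ d) (Tw u))))) = _
    rw [Tw_Tw]

def ct : V := Tw cc

lemma Ssum_pow_lt : ∀ (i : ℕ) (u : V) (j : ℕ), j < i → ((Ssum ^ i) u) j = 0 := by
  intro i
  induction i with
  | zero => intro u j h; exact absurd h (Nat.not_lt_zero j)
  | succ i ih =>
    intro u j hj
    rw [pow_succ']
    show Ssum ((Ssum ^ i) u) j = 0
    rw [Ssum_apply]
    apply Finset.sum_eq_zero
    intro k hk
    exact ih u k (lt_of_lt_of_le (Finset.mem_range.1 hk) (Nat.lt_succ_iff.1 hj))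

lemma Ssum_pow_diag : ∀ j : ℕ, ((Ssum ^ j) ct) j = -1 := by
  intro j
  induction j with
  | zero => show ct 0 = -1; show sg 0 * cc 0 = -1; decide
  | succ j ih =>
    rw [pow_succ']
    show Ssum ((Ssum ^ j) ct) (j + 1) = -1
    rw [Ssum_apply, Finset.sum_range_succ, ih]
    rw [Finset.sum_eq_zero, zero_add]
    intro k hk
    exact Ssum_pow_lt j ct k (Finset.mem_range.1 hk)

lemma aeval_Ssum_eq_zero {Q : Polynomial (Fin 3)} (hQ : (Polynomial.aeval Ssum) Q ct = 0) :
    Q = 0 := by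
  have key : ∀ j, Q.coeff j = 0 := by
    intro j
    induction j using Nat.strong_induction_on with
    | _ j IH =>
      by_cases hdeg : Q.natDegree < j
      · exact Polynomial.coeff_eq_zero_of_natDegree_lt hdeg
      · have h2 : (∑ i ∈ Finset.range (Q.natDegree + 1),
            Q.coeff i • ((Ssum ^ i : Module.End (Fin 3) V))) ct = 0 := by
          rw [← Polynomial.aeval_eq_sum_range]; exact hQ
        have hsum : ∑ i ∈ Finset.range (Q.natDegree + 1),
            Q.coeff i * ((Ssum ^ i) ct j) = 0 := by
          calc ∑ i ∈ Finset.range (Q.natDegree + 1), Q.coeff i * ((Ssum ^ i) ct j)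
              = (∑ i ∈ Finset.range (Q.natDegree + 1),
                  Q.coeff i • ((Ssum ^ i : Module.End (Fin 3) V))) ct j := by
                rw [LinearMap.sum_apply, Finset.sum_apply]
                apply Finset.sum_congr rfl
                intro i _
                rw [LinearMap.smul_apply, Pi.smul_apply, smul_eq_mul]
            _ = 0 := by rw [h2]; rfl
        rw [Finset.sum_eq_single_of_mem j (Finset.mem_range.2 (by omega))] at hsum
        · rw [Ssum_pow_diag, mul_neg_one, neg_eq_zero] at hsum
          exact hsum
        · intro i _ hne
          rcases lt_or_gt_of_ne hne with h | h
          · rw [IH i h, zero_mul]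
          · rw [Ssum_pow_lt i ct j h, mul_zero]
  exact Polynomial.ext fun n => by rw [key n, Polynomial.coeff_zero]

lemma indep_nat {k : ℕ} (d : Fin k → ℕ) (hd : Function.Injective d) (f : Fin k → Fin 3)
    (h : ∑ i, f i • ((A' ^ (d i)) cc) = 0) : ∀ i, f i = 0 := by
  set P : Polynomial (Fin 3) := ∑ i, Polynomial.C (f i) * Polynomial.X ^ (d i) with hP
  have h2 : ∑ i, f i • (((Ssum - 1) ^ (d i)) ct) = 0 := by
    have h1 : Tw (∑ i, f i • (((Ssum - 1) ^ (d i)) ct)) = 0 := by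
      rw [map_sum]
      calc ∑ i, Tw (f i • (((Ssum - 1) ^ (d i)) ct))
          = ∑ i, f i • ((A' ^ (d i)) cc) := by
            apply Finset.sum_congr rfl
            intro i _
            rw [map_smul, A'_pow]
            rfl
        _ = 0 := h
    have := congrArg (⇑Tw) h1
    rwa [Tw_Tw, map_zero] at this
  have hMP : (Polynomial.aeval (Ssum - 1)) P ct = 0 := by
    have h3 : (Polynomial.aeval (Ssum - 1)) P
        = ∑ i, f i • (((Ssum - 1) ^ (d i)) : Module.End (Fin 3) V) := by
      rw [hP, map_sum]
      apply Finset.sum_congr rfl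
      intro i _
      rw [map_mul, map_pow, Polynomial.aeval_C, Polynomial.aeval_X, ← Algebra.smul_def]
    rw [h3, LinearMap.sum_apply]
    rw [← h2]
    apply Finset.sum_congr rfl
    intro i _
    rw [LinearMap.smul_apply]
  have hQ : (Polynomial.aeval Ssum) (P.comp (Polynomial.X - 1)) ct = 0 := by
    have h4 : (Polynomial.aeval Ssum) (Polynomial.X - 1 : Polynomial (Fin 3)) = Ssum - 1 := by
      simp
    rw [Polynomial.aeval_comp, h4]
    exact hMP
  have hQ0 := aeval_Ssum_eq_zero hQ
  have hP0 : P = 0 := by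
    have h5 := congrArg (fun q : Polynomial (Fin 3) => q.comp (Polynomial.X + 1)) hQ0
    simpa [Polynomial.comp_assoc, Polynomial.sub_comp, Polynomial.X_comp, Polynomial.one_comp,
      add_sub_cancel_right] using h5
  intro i
  have h6 : P.coeff (d i) = f i := by
    rw [hP, Polynomial.finset_sum_coeff]
    rw [Finset.sum_eq_single_of_mem i (Finset.mem_univ i)]
    · rw [Polynomial.coeff_C_mul_X_pow, if_pos rfl]
    · intro j _ hj
      rw [Polynomial.coeff_C_mul_X_pow, if_neg]
      intro hc
      exact hj (hd hc.symm)
  rw [← h6, hP0, Polynomial.coeff_zero]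

lemma indep_int {k : ℕ} (n : Fin k → ℤ) (hn : Function.Injective n) (f : Fin k → Fin 3)
    (h : ∑ i, f i • vv (n i) = 0) : ∀ i, f i = 0 := by
  cases k with
  | zero => exact fun i => i.elim0
  | succ k =>
    set m₀ : ℤ := Finset.univ.inf' Finset.univ_nonempty n with hm₀
    have hle : ∀ i, m₀ ≤ n i := fun i => Finset.inf'_le n (Finset.mem_univ i)
    set d : Fin (k + 1) → ℕ := fun i => (n i - m₀).toNat with hdd
    have hco : ∀ i, (d i : ℤ) = n i - m₀ := fun i => Int.toNat_of_nonneg (by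
      have := hle i; omega)
    have hd : Function.Injective d := by
      intro i j hij
      apply hn
      have hi := hco i; have hj := hco j
      rw [hij] at hi
      omega
    have h2 : ∑ i, f i • ((A' ^ (d i)) cc) = 0 := by
      have hstep : ∀ i : Fin (k + 1), (A' ^ (d i)) cc = (a ^ (-m₀)) (vv (n i)) := by
        intro i
        rw [← apow_nat, ← zpow_natCast, hco i]
        show (a ^ (n i - m₀)) cc = (a ^ (-m₀)) ((a ^ (n i)) cc)
        rw [show (a ^ (-m₀)) ((a ^ (n i)) cc) = ((a ^ (-m₀)) * (a ^ (n i))) cc from rfl,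
          ← zpow_add, show -m₀ + n i = n i - m₀ from by ring]
      have hmap := congrArg (AMH (-m₀)) h
      rw [map_sum, map_zero] at hmap
      calc ∑ i, f i • ((A' ^ (d i)) cc)
          = ∑ i, AMH (-m₀) (f i • vv (n i)) := by
            apply Finset.sum_congr rfl
            intro i _
            rw [AMH_smul, AMH_apply, hstep i]
        _ = 0 := hmap
    exact indep_nat d hd f h2


def e3z : ZMod 3 ≃+ Fin 3 where
  toFun := fun t => t
  invFun := fun t => t
  left_inv := fun _ => rfl
  right_inv := fun _ => rfl
  map_add' := fun _ _ => rfl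

def slin : (ℤ →₀ Fin 3) →+ V where
  toFun f := f.sum fun m t => t • vv m
  map_zero' := Finsupp.sum_zero_index
  map_add' f g := by
    exact Finsupp.sum_add_index' (fun m => zero_smul (Fin 3) (vv m))
      (fun m t s => add_smul t s (vv m))

noncomputable def Psi : Multiplicative (ℤ →₀ Fin 3) →* Equiv.Perm V :=
  tmh.comp (AddMonoidHom.toMultiplicative slin)

lemma Psi_apply (f : ℤ →₀ Fin 3) :
    Psi (ofAdd f) = tmh (ofAdd (f.sum fun m t => t • vv m)) := by
  apply Equiv.ext
  intro w
  rfl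

lemma Psi_single (m : ℤ) (t : Fin 3) :
    Psi (ofAdd (Finsupp.single m t)) = tmh (ofAdd (t • vv m)) := by
  rw [Psi_apply, Finsupp.sum_single_index (zero_smul (Fin 3) (vv m))]

lemma gen_eq (m : ℤ) : a ^ m * α * a ^ (-m) = tmh (ofAdd (vv m)) := by
  have h := conj_eq m 1
  rw [zpow_one, one_smul] at h
  exact h

lemma indep_finsupp (f : ℤ →₀ Fin 3) (h : (f.sum fun m t => t • vv m) = 0) : f = 0 := by
  by_contra hne
  set s := f.support with hs
  set e := s.equivFin with he
  set n : Fin s.card → ℤ := fun i => (e.symm i : ℤ) with hnn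
  have hn : Function.Injective n := fun i j hij =>
    e.symm.injective (Subtype.ext hij)
  have hsum : ∑ i, f (n i) • vv (n i) = 0 := by
    rw [← h, Finsupp.sum]
    rw [← Finset.sum_coe_sort s (fun m => f m • vv m)]
    exact Fintype.sum_equiv e.symm _ _ (fun i => rfl)
  have hz := indep_int n hn (fun i => f (n i)) hsum
  obtain ⟨m, hm⟩ := Finsupp.support_nonempty_iff.2 hne
  have hfm : f m = 0 := by
    have h3 := hz (e ⟨m, hm⟩)
    simpa [hnn, Equiv.symm_apply_apply] using h3
  exact (Finsupp.mem_support_iff.1 hm) hfm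

lemma Psi_inj : Function.Injective Psi := by
  rw [injective_iff_map_eq_one]
  intro f hf
  have h1 : slin (Multiplicative.toAdd f) = 0 := by
    apply tmh_eq_one
    exact hf
  have h1' : ((Multiplicative.toAdd f).sum fun m t => t • vv m) = 0 := h1
  have h2 : Multiplicative.toAdd f = 0 := indep_finsupp _ h1'
  have : f = ofAdd (Multiplicative.toAdd f) := rfl
  rw [this, h2]
  rfl

lemma Psi_range : Psi.range = N := by
  apply le_antisymm
  · rw [MonoidHom.range_eq_map]
    have hmem : ∀ g : ℤ →₀ Fin 3,
        ofAdd g ∈ Subgroup.closure {x : Multiplicative (ℤ →₀ Fin 3) |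
          ∃ m t, x = ofAdd (Finsupp.single m t)} := by
      intro g
      induction g using Finsupp.induction with
      | zero => exact Subgroup.one_mem _
      | single_add m t g hg ht ih =>
        rw [ofAdd_add]
        exact mul_mem (Subgroup.subset_closure ⟨m, t, rfl⟩) ih
    have htop : (⊤ : Subgroup (Multiplicative (ℤ →₀ Fin 3)))
        = Subgroup.closure {x : Multiplicative (ℤ →₀ Fin 3) |
          ∃ m t, x = ofAdd (Finsupp.single m t)} := by
      symm
      rw [Subgroup.eq_top_iff']
      intro x
      exact hmem (Multiplicative.toAdd x)
    rw [htop, MonoidHom.map_closure]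
    rw [Subgroup.closure_le]
    rintro - ⟨x, ⟨m, t, rfl⟩, rfl⟩
    rw [Psi_single]
    rw [show (t • vv m) = t.val • vv m from by
      rw [← Nat.cast_smul_eq_nsmul (Fin 3), Fin.cast_val_eq_self]]
    rw [ofAdd_nsmul, map_pow]
    refine pow_mem ?_ t.val
    rw [← gen_eq]
    exact Subgroup.subset_closure ⟨m, rfl⟩
  · rw [N, Subgroup.closure_le]
    rintro - ⟨m, rfl⟩
    exact ⟨ofAdd (Finsupp.single m 1), by rw [Psi_single, one_smul, ← gen_eq]⟩

noncomputable def isoN : N ≃* Multiplicative (ℤ →₀ ZMod 3) :=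
  ((MulEquiv.subgroupCongr Psi_range).symm.trans (MonoidHom.ofInjective Psi_inj).symm).trans
    (AddEquiv.toMultiplicative (Finsupp.mapRange.addEquiv e3z)).symm

/-- The subgroup `N` generated by `{a⁻ⁿαaⁿ : n ∈ ℤ}` is
isomorphic to `⨁_{i ∈ ℤ} ℤ/3ℤ` (as the multiplicative version of `ℤ →₀ ZMod 3`);
concretely, for any integers `n₁ < … < n_k` and signs `ε₁, …, ε_k ∈ {1, -1}`, the
product `(a^{-n₁}α^{ε₁}a^{n₁})⋯(a^{-n_k}α^{ε_k}a^{n_k})` (taken left-to-right,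
hence the reversed Lean product) is not the identity. -/
theorem N_iso_directSum :
    Nonempty (N ≃* Multiplicative (ℤ →₀ ZMod 3)) ∧
    ∀ (k : ℕ) (n : Fin (k + 1) → ℤ), StrictMono n →
      ∀ ε : Fin (k + 1) → ℤ, (∀ i, ε i = 1 ∨ ε i = -1) →
        ((List.ofFn fun i => a ^ (n i) * α ^ (ε i) * a ^ (-(n i))).reverse).prod ≠ 1 := by
  constructor
  · exact ⟨isoN⟩
  · intro k n hmono ε hε hcontra
    have hlist : (List.ofFn fun i => a ^ (n i) * α ^ (ε i) * a ^ (-(n i)))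
        = List.map tmh (List.ofFn fun i => ofAdd ((ε i) • vv (n i))) := by
      rw [List.map_ofFn]
      congr 1
      funext i
      exact conj_eq (n i) (ε i)
    have key : ((List.ofFn fun i => a ^ (n i) * α ^ (ε i) * a ^ (-(n i))).reverse).prod
        = tmh (ofAdd (∑ i, (ε i) • vv (n i))) := by
      rw [hlist, ← List.map_reverse, (tmh.map_list_prod _).symm, List.prod_reverse,
        List.prod_ofFn, ← ofAdd_sum]
    rw [key] at hcontra
    have hU := tmh_eq_one hcontra
    have hU' : (∑ i, (((ε i : ℤ) : Fin 3)) • vv (n i)) = 0 := by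
      simp_rw [Int.cast_smul_eq_zsmul]
      exact hU
    have hz := indep_int n hmono.injective (fun i => ((ε i : ℤ) : Fin 3)) hU'
    have h0 : ((ε 0 : ℤ) : Fin 3) = 0 := hz 0
    rcases hε 0 with h1 | h1 <;> rw [h1] at h0 <;> simp at h0

end Lamplighter
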